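/- Let p be an odd prime. Every left brace with additive group isomorphic to (Z/(p))³ whose socle has order p² is isomorphic to exactly one of the following three left braces on (Z/(p))³ (with componentwise addition): (i) (x₁,y₁,z₁)·(x₂,y₂,z₂) = (x₁+x₂+z₁y₂+C(z₁,2)z₂, y₁+y₂+z₁z₂, z₁+z₂), where C(n,2) = n(n−1)/2; (ii) (x₁,y₁,z₁)·(x₂,y₂,z₂) = (x₁+x₂+y₁y₂, y₁+y₂, z₁+z₂); (iii) (x₁,y₁,z₁)·(x₂,y₂,z₂) = (x₁+x₂+z₁y₂, y₁+y₂, z₁+z₂). These three left braces are pairwise non-isomorphic. -/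

import Mathlib

/-- A left brace: an abelian group `(B,+)` and a group `(B,·)` such that
`a·(b+c)+a = a·b+a·c` for all `a b c`. -/
class LeftBrace (B : Type*) extends AddCommGroup B, Group B where
  left_brace : ∀ a b c : B, a * (b + c) + a = a * b + a * c

/-- `C(z,2) = z(z−1)/2` computed in `Z/(p)` (for odd `p`). -/
def choose2ZMod (p : ℕ) (z : ZMod p) : ZMod p := z * (z - 1) * (2 : ZMod p)⁻¹

/-- Multiplication (i): `(x₁,y₁,z₁)·(x₂,y₂,z₂) =
(x₁+x₂+z₁y₂+C(z₁,2)z₂, y₁+y₂+z₁z₂, z₁+z₂)`. -/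
def mulSocP2A (p : ℕ) (a b : ZMod p × ZMod p × ZMod p) : ZMod p × ZMod p × ZMod p :=
  (a.1 + b.1 + a.2.2 * b.2.1 + choose2ZMod p a.2.2 * b.2.2,
   a.2.1 + b.2.1 + a.2.2 * b.2.2,
   a.2.2 + b.2.2)

/-- Multiplication (ii): `(x₁,y₁,z₁)·(x₂,y₂,z₂) = (x₁+x₂+y₁y₂, y₁+y₂, z₁+z₂)`. -/
def mulSocP2B (p : ℕ) (a b : ZMod p × ZMod p × ZMod p) : ZMod p × ZMod p × ZMod p :=
  (a.1 + b.1 + a.2.1 * b.2.1, a.2.1 + b.2.1, a.2.2 + b.2.2)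

/-- Multiplication (iii): `(x₁,y₁,z₁)·(x₂,y₂,z₂) = (x₁+x₂+z₁y₂, y₁+y₂, z₁+z₂)`. -/
def mulSocP2C (p : ℕ) (a b : ZMod p × ZMod p × ZMod p) : ZMod p × ZMod p × ZMod p :=
  (a.1 + b.1 + a.2.2 * b.2.1, a.2.1 + b.2.1, a.2.2 + b.2.2)

namespace LB
variable {B : Type*} [LeftBrace B]

lemma ax (a b c : B) : a * (b + c) + a = a * b + a * c := LeftBrace.left_brace a b c

lemma mul_zero' (a : B) : a * (0 : B) = a := by
  have h := ax a 0 0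
  simp only [add_zero] at h
  exact (add_left_cancel h).symm

lemma one_eq_zero : (1 : B) = 0 := by
  have := mul_zero' (1 : B); rw [one_mul] at this; exact this.symm

lemma L_add (a b c : B) : a * (b + c) - a = (a * b - a) + (a * c - a) := by
  have h := ax a b c
  have : a * (b + c) = a * b + a * c - a := eq_sub_of_add_eq h
  rw [this]; abel

lemma mul_sub' (a b c : B) : a * (b - c) = a * b - a * c + a := by
  have h := ax a (b - c) c
  rw [sub_add_cancel] at h
  have h2 : a * (b - c) = a * b + a - a * c := eq_sub_of_add_eq h.symm
  rw [h2]; abel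

lemma L_comp (a b c : B) : (a * b) * c - (a * b) = a * (b * c - b) - a := by
  rw [mul_sub' a (b * c) b, ← mul_assoc]; abel

def lam (a : B) : B ≃+ B where
  toFun b := a * b - a
  invFun b := a⁻¹ * b - a⁻¹
  left_inv b := by
    show a⁻¹ * (a * b - a) - a⁻¹ = b
    have h := L_comp a⁻¹ a b
    rw [inv_mul_cancel, one_mul, one_eq_zero, sub_zero] at h
    exact h.symm
  right_inv b := by
    show a * (a⁻¹ * b - a⁻¹) - a = b
    have h := L_comp a a⁻¹ b
    rw [mul_inv_cancel, one_mul, one_eq_zero, sub_zero] at h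
    exact h.symm
  map_add' b c := L_add a b c

lemma lam_apply (a b : B) : lam a b = a * b - a := rfl

instance autGroup (B : Type*) [LeftBrace B] : Group (AddAut B) where
  mul g h := h.trans g
  one := AddEquiv.refl _
  inv := AddEquiv.symm
  mul_assoc _ _ _ := rfl
  one_mul _ := rfl
  mul_one _ := rfl
  inv_mul_cancel := AddEquiv.self_trans_symm

@[simp] lemma aut_one_apply (b : B) : (1 : AddAut B) b = b := rfl

@[simp] lemma aut_mul_apply (f g : AddAut B) (b : B) : (f * g) b = f (g b) := rfl

def lamHom (B : Type*) [LeftBrace B] : B →* AddAut B where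
  toFun := lam
  map_one' := by
    ext b; simp [lam_apply, one_mul, one_eq_zero]
  map_mul' a b := by
    ext c
    show lam (a * b) c = lam a (lam b c)
    simp only [lam_apply]
    exact L_comp a b c

lemma mem_ker_iff {a : B} : a ∈ (lamHom B).ker ↔ ∀ b, a * b - a = b := by
  rw [MonoidHom.mem_ker]
  constructor
  · intro h b
    have := congrArg (fun f : AddAut B => f b) h
    simpa [lamHom, lam_apply] using this
  · intro h
    ext b
    simpa [lamHom, lam_apply] using h b

lemma K_mul {s : B} (hs : s ∈ (lamHom B).ker) (b : B) : s * b = s + b := by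
  have := mem_ker_iff.mp hs b
  rw [sub_eq_iff_eq_add] at this
  rw [this]; abel

lemma L_mem_K {s : B} (a : B) (hs : s ∈ (lamHom B).ker) : a * s - a ∈ (lamHom B).ker := by
  have hc : a * s * a⁻¹ ∈ (lamHom B).ker :=
    (MonoidHom.normal_ker (lamHom B)).conj_mem s hs a
  have h1 : a * s = a * s * a⁻¹ + a := by
    rw [← K_mul hc a, mul_assoc, inv_mul_cancel, mul_one]
  rw [h1]; simpa using hc

lemma neg_mem_K {s : B} (hs : s ∈ (lamHom B).ker) : -s ∈ (lamHom B).ker := by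
  have hi : s⁻¹ ∈ (lamHom B).ker := inv_mem hs
  have h1 : s * s⁻¹ = s + s⁻¹ := K_mul hs s⁻¹
  rw [mul_inv_cancel, one_eq_zero] at h1
  have : s⁻¹ = -s := by rw [eq_neg_of_add_eq_zero_right h1.symm]
  rwa [← this]

lemma lam_add_K {s a : B} (hs : s ∈ (lamHom B).ker) : lamHom B (s + a) = lamHom B a := by
  rw [← K_mul hs a, map_mul, MonoidHom.mem_ker.mp hs, one_mul]

lemma lam_pow (t : B) (hc : ∀ b : B, (t * b - t) - b ∈ (lamHom B).ker) :
    ∀ (n : ℕ) (x : B), x - n • t ∈ (lamHom B).ker → lamHom B x = (lamHom B t) ^ n := by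
  intro n
  induction n with
  | zero =>
    intro x hx
    simp only [zero_smul, sub_zero] at hx
    simpa using MonoidHom.mem_ker.mp hx
  | succ n ih =>
    intro x hx
    have h1 : (x - t) - n • t ∈ (lamHom B).ker := by
      have : (x - t) - n • t = x - (n + 1) • t := by rw [succ_nsmul]; abel
      rwa [this]
    have h2 := ih (x - t) h1
    have h3 : x - t * (x - t) ∈ (lamHom B).ker := by
      have he : x - t * (x - t) = -((t * (x - t) - t) - (x - t)) := by abel
      rw [he]; exact neg_mem_K (hc (x - t))
    have h4 : x = (x - t * (x - t)) + t * (x - t) := by abel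
    rw [h4, lam_add_K h3, map_mul, h2, pow_succ']

end LB

namespace LBV

abbrev Vp (p : ℕ) := ZMod p × ZMod p × ZMod p

variable (p : ℕ)

/-- linear map sending `(x,y,w) ↦ x•b₁+y•b₂+w•b₃`. -/
def trip (b₁ b₂ b₃ : Vp p) : Vp p →ₗ[ZMod p] Vp p where
  toFun v := v.1 • b₁ + v.2.1 • b₂ + v.2.2 • b₃
  map_add' u v := by
    simp only [Prod.fst_add, Prod.snd_add, add_smul]; abel
  map_smul' c v := by
    simp only [Prod.smul_fst, Prod.smul_snd, smul_eq_mul, RingHom.id_apply, smul_add,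
      mul_smul]

lemma trip_apply (b₁ b₂ b₃ : Vp p) (v : Vp p) :
    trip p b₁ b₂ b₃ v = v.1 • b₁ + v.2.1 • b₂ + v.2.2 • b₃ := rfl

/-- Jordan block J₃ (unipotent). -/
def sA : Module.End (ZMod p) (Vp p) :=
  trip p (1, 0, 0) (1, 1, 0) (0, 1, 1)

/-- Jordan type (2,1). -/
def sB : Module.End (ZMod p) (Vp p) :=
  trip p (1, 0, 0) (1, 1, 0) (0, 0, 1)

lemma sA_apply (v : Vp p) : sA p v = (v.1 + v.2.1, v.2.1 + v.2.2, v.2.2) := by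
  refine Prod.ext ?_ (Prod.ext ?_ ?_) <;>
    simp [sA, trip_apply, Prod.smul_def, smul_eq_mul] <;> ring

lemma sB_apply (v : Vp p) : sB p v = (v.1 + v.2.1, v.2.1, v.2.2) := by
  refine Prod.ext ?_ (Prod.ext ?_ ?_) <;>
    simp [sB, trip_apply, Prod.smul_def, smul_eq_mul] <;> ring

def zY : Vp p →ₗ[ZMod p] ZMod p :=
  (LinearMap.fst (ZMod p) (ZMod p) (ZMod p)).comp (LinearMap.snd (ZMod p) (ZMod p) (ZMod p × ZMod p))

def zZ : Vp p →ₗ[ZMod p] ZMod p :=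
  (LinearMap.snd (ZMod p) (ZMod p) (ZMod p)).comp (LinearMap.snd (ZMod p) (ZMod p) (ZMod p × ZMod p))

@[simp] lemma zY_apply (v : Vp p) : zY p v = v.2.1 := rfl
@[simp] lemma zZ_apply (v : Vp p) : zZ p v = v.2.2 := rfl

variable [Fact p.Prime]

lemma two_ne_zero' (hodd : p ≠ 2) : (2 : ZMod p) ≠ 0 := by
  intro h
  have hd : (p : ℕ) ∣ 2 := by
    have := (ZMod.natCast_eq_zero_iff 2 p).mp (by exact_mod_cast h)
    exact this
  exact hodd ((Nat.prime_dvd_prime_iff_eq Fact.out Nat.prime_two).mp hd)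

lemma choose2_add_one (hodd : p ≠ 2) (c : ZMod p) :
    choose2ZMod p (c + 1) = choose2ZMod p c + c := by
  have h2 : (2 : ZMod p) * (2 : ZMod p)⁻¹ = 1 := mul_inv_cancel₀ (two_ne_zero' p hodd)
  unfold choose2ZMod
  linear_combination c * h2

@[simp] lemma choose2_zero : choose2ZMod p 0 = 0 := by simp [choose2ZMod]

lemma sA_pow (hodd : p ≠ 2) (k : ℕ) (v : Vp p) :
    (sA p ^ k) v = (v.1 + (k : ZMod p) * v.2.1 + choose2ZMod p (k : ZMod p) * v.2.2,
      v.2.1 + (k : ZMod p) * v.2.2, v.2.2) := by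
  induction k with
  | zero => simp [Prod.ext_iff]
  | succ k ih =>
    rw [pow_succ', Module.End.mul_apply, ih, sA_apply]
    rw [Nat.cast_add, Nat.cast_one, choose2_add_one p hodd]
    refine Prod.ext (by dsimp; ring) (Prod.ext (by dsimp; ring) rfl)

lemma sB_pow (k : ℕ) (v : Vp p) :
    (sB p ^ k) v = (v.1 + (k : ZMod p) * v.2.1, v.2.1, v.2.2) := by
  induction k with
  | zero => simp [Prod.ext_iff]
  | succ k ih =>
    rw [pow_succ', Module.End.mul_apply, ih, sB_apply]
    rw [Nat.cast_add, Nat.cast_one]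
    refine Prod.ext (by dsimp; ring) (Prod.ext rfl rfl)

lemma val_cast (c : ZMod p) : ((c.val : ℕ) : ZMod p) = c := by
  simp [ZMod.natCast_val, ZMod.cast_id]

lemma mulA_eq (hodd : p ≠ 2) (a b : Vp p) : mulSocP2A p a b = a + (sA p ^ (zZ p a).val) b := by
  rw [sA_pow p hodd, val_cast]
  refine Prod.ext ?_ (Prod.ext ?_ ?_) <;>
    simp [mulSocP2A, Prod.fst_add, Prod.snd_add] <;> ring

lemma mulB_eq (a b : Vp p) : mulSocP2B p a b = a + (sB p ^ (zY p a).val) b := by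
  rw [sB_pow p, val_cast]
  refine Prod.ext ?_ (Prod.ext ?_ ?_) <;>
    simp [mulSocP2B, Prod.fst_add, Prod.snd_add] <;> ring

lemma mulC_eq (a b : Vp p) : mulSocP2C p a b = a + (sB p ^ (zZ p a).val) b := by
  rw [sB_pow p, val_cast]
  refine Prod.ext ?_ (Prod.ext ?_ ?_) <;>
    simp [mulSocP2C, Prod.fst_add, Prod.snd_add] <;> ring

/-- Transfer a normal form along a linear bijection. -/
lemma transfer (σ σ' : Module.End (ZMod p) (Vp p)) (z z' : Vp p →ₗ[ZMod p] ZMod p)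
    (M M' : Vp p → Vp p → Vp p)
    (hM : ∀ a b, M a b = a + (σ ^ (z a).val) b)
    (hM' : ∀ a b, M' a b = a + (σ' ^ (z' a).val) b)
    (G : Vp p →ₗ[ZMod p] Vp p) (hGinj : Function.Injective G)
    (hGσ : ∀ w, σ (G w) = G (σ' w)) (hGz : ∀ w, z (G w) = z' w) :
    ∃ Φ : Vp p ≃+ Vp p, ∀ a b, Φ (M a b) = M' (Φ a) (Φ b) := by
  have hGbij : Function.Bijective G := ⟨hGinj, by
    have := Finite.injective_iff_bijective.mp hGinj
    exact this.2⟩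
  let Ψ := LinearEquiv.ofBijective G hGbij
  have hΨ : ∀ w, Ψ w = G w := fun w => rfl
  have hΨs : ∀ w, Ψ.symm (G w) = w := by
    intro w
    apply Ψ.injective
    rw [LinearEquiv.apply_symm_apply, hΨ]
  have hpow : ∀ (n : ℕ) (w : Vp p), (σ ^ n) (G w) = G ((σ' ^ n) w) := by
    intro n
    induction n with
    | zero => intro w; simp
    | succ n ih =>
      intro w
      rw [pow_succ, Module.End.mul_apply, hGσ, ih]
      exact congrArg G (by rw [← Module.End.mul_apply, ← pow_succ])
  refine ⟨Ψ.symm.toAddEquiv, ?_⟩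
  intro a b
  obtain ⟨a', rfl⟩ := hGbij.2 a
  obtain ⟨b', rfl⟩ := hGbij.2 b
  show Ψ.symm (M (G a') (G b')) = M' (Ψ.symm (G a')) (Ψ.symm (G b'))
  rw [hM, hM', hΨs, hΨs, hGz, hpow, ← map_add, hΨs]

lemma classify (hodd : p ≠ 2)
    (σ : Module.End (ZMod p) (Vp p)) (z : Vp p →ₗ[ZMod p] ZMod p)
    (τ : Vp p) (hzτ : z τ = 1)
    (hσp : σ ^ p = 1) (hσne : ∃ v, σ v ≠ v)
    (hzσ : ∀ v, z (σ v) = z v)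
    (M : Vp p → Vp p → Vp p)
    (hM : ∀ a b, M a b = a + (σ ^ (z a).val) b) :
    (∃ Φ : Vp p ≃+ Vp p, ∀ a b, Φ (M a b) = mulSocP2A p (Φ a) (Φ b)) ∨
    (∃ Φ : Vp p ≃+ Vp p, ∀ a b, Φ (M a b) = mulSocP2B p (Φ a) (Φ b)) ∨
    (∃ Φ : Vp p ≃+ Vp p, ∀ a b, Φ (M a b) = mulSocP2C p (Φ a) (Φ b)) := by
  classical
  set N : Module.End (ZMod p) (Vp p) := σ - 1 with hN
  have hNap : ∀ v, N v = σ v - v := by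
    intro v; simp [hN, LinearMap.sub_apply]
  have hσap : ∀ v, σ v = N v + v := by
    intro v; rw [hNap]; abel
  have hzN : ∀ v, z (N v) = 0 := by
    intro v; rw [hNap, map_sub, hzσ, sub_self]
  have hNe : ∃ v, N v ≠ 0 := by
    obtain ⟨v, hv⟩ := hσne
    refine ⟨v, fun h0 => hv ?_⟩
    have h1 := hNap v
    rw [h0] at h1
    exact sub_eq_zero.mp h1.symm
  haveI : CharP (Module.End (ZMod p) (Vp p)) p := by
    refine charP_of_injective_algebraMap (R := ZMod p)
      (A := Module.End (ZMod p) (Vp p)) ?_ p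
    intro a b hab
    have h := congrArg (fun f : Module.End (ZMod p) (Vp p) =>
      f ((1 : ZMod p), (0 : ZMod p), (0 : ZMod p))) hab
    have h2 := congrArg Prod.fst h
    simpa [Module.algebraMap_end_apply, Prod.smul_def, smul_eq_mul] using h2
  have hNp : N ^ p = 0 := by
    rw [hN, sub_pow_char_of_commute p (Commute.one_right σ), hσp, one_pow, sub_self]
  have hfr : Module.finrank (ZMod p) (Vp p) = 3 := by
    simp [Module.finrank_prod, Module.finrank_self]
  have hN3 : N ^ 3 = 0 := by
    have h := IsNilpotent.charpoly_eq_X_pow_finrank (φ := N) ⟨p, hNp⟩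
    have h2 := LinearMap.aeval_self_charpoly N
    rw [h, hfr] at h2
    simpa using h2
  have hN3ap : ∀ v, N (N (N v)) = 0 := by
    intro v
    have := congrFun (congrArg DFunLike.coe hN3) v
    simpa [pow_succ, Module.End.mul_apply] using this
  have hzs : Function.Surjective z := fun c => ⟨c • τ, by simp [map_smul, hzτ, smul_eq_mul]⟩
  by_cases hA : ∀ v, N (N v) = 0
  · -- N² = 0 : types (ii)/(iii)
    right
    have hNN : N ∘ₗ N = 0 := LinearMap.ext fun v => by
      simp [LinearMap.comp_apply, hA v]
    have hrange_le : LinearMap.range N ≤ LinearMap.ker N :=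
      LinearMap.range_le_ker_iff.mpr hNN
    have hkerz2 : Module.finrank (ZMod p) (LinearMap.ker z) = 2 := by
      have h := LinearMap.finrank_range_add_finrank_ker z
      rw [hfr, LinearMap.range_eq_top.mpr hzs, finrank_top] at h
      simp [Module.finrank_self] at h
      omega
    have hkerN2 : Module.finrank (ZMod p) (LinearMap.ker N) = 2 := by
      have h := LinearMap.finrank_range_add_finrank_ker N
      rw [hfr] at h
      have h1 : Module.finrank (ZMod p) (LinearMap.range N) ≤
          Module.finrank (ZMod p) (LinearMap.ker N) := Submodule.finrank_mono hrange_le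
      have h2 : Module.finrank (ZMod p) (LinearMap.range N) ≠ 0 := by
        intro h0
        obtain ⟨v, hv⟩ := hNe
        have hbot : LinearMap.range N = ⊥ := Submodule.finrank_eq_zero.mp h0
        have : N = 0 := LinearMap.range_eq_bot.mp hbot
        rw [this] at hv; simp at hv
      omega
    by_cases hc : LinearMap.ker z ≤ LinearMap.ker N
    · -- (ii)
      left
      have hkeq : LinearMap.ker z = LinearMap.ker N :=
        Submodule.eq_of_le_of_finrank_le hc (by rw [hkerz2, hkerN2])
      obtain ⟨v, hv⟩ := hNe
      have hzv : z v ≠ 0 := by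
        intro h0
        exact hv (LinearMap.mem_ker.mp (hc (LinearMap.mem_ker.mpr h0)))
      set b₂ : Vp p := (z v)⁻¹ • v with hb₂def
      have hzb₂ : z b₂ = 1 := by
        rw [hb₂def, map_smul, smul_eq_mul, inv_mul_cancel₀ hzv]
      set b₁ : Vp p := N b₂ with hb₁def
      have hb₁ : b₁ ≠ 0 := by
        rw [hb₁def, hb₂def, map_smul]
        exact smul_ne_zero (inv_ne_zero hzv) hv
      have hNb₁ : N b₁ = 0 := hA b₂
      have hzb₁ : z b₁ = 0 := hzN b₂
      have hspan : ¬ (LinearMap.ker z ≤ Submodule.span (ZMod p) {b₁}) := by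
        intro hle
        have h1 := Submodule.finrank_mono (R := ZMod p) hle
        rw [hkerz2, finrank_span_singleton hb₁] at h1
        omega
      obtain ⟨b₃, hb₃k, hb₃s⟩ := SetLike.not_le_iff_exists.mp hspan
      have hzb₃ : z b₃ = 0 := LinearMap.mem_ker.mp hb₃k
      have hNb₃ : N b₃ = 0 := LinearMap.mem_ker.mp (hkeq ▸ hb₃k)
      have hGinj : Function.Injective (trip p b₁ b₂ b₃) := by
        rw [injective_iff_map_eq_zero]
        intro u hu
        rw [trip_apply] at hu
        have h2 : u.2.1 = 0 := by
          have := congrArg z hu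
          simpa [map_add, map_smul, hzb₁, hzb₂, hzb₃, smul_eq_mul] using this
        rw [h2, zero_smul, add_zero] at hu
        have h3 : u.2.2 = 0 := by
          by_contra h0
          apply hb₃s
          rw [Submodule.mem_span_singleton]
          refine ⟨-(u.2.2⁻¹ * u.1), ?_⟩
          have h := eq_neg_of_add_eq_zero_right hu
          rw [neg_smul, mul_smul, ← smul_neg, ← h, smul_smul,
            inv_mul_cancel₀ h0, one_smul]
        rw [h3, zero_smul, add_zero] at hu
        have h1 : u.1 = 0 := by
          rcases smul_eq_zero.mp hu with h | h
          · exact h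
          · exact absurd h hb₁
        have : u = (u.1, u.2.1, u.2.2) := rfl
        rw [this, h1, h2, h3]; rfl
      have hGσ : ∀ w, σ (trip p b₁ b₂ b₃ w) = trip p b₁ b₂ b₃ (sB p w) := by
        intro w
        have e2 : N b₂ = b₁ := hb₁def.symm
        have hNG : N (trip p b₁ b₂ b₃ w) = w.2.1 • b₁ := by
          rw [trip_apply]
          simp [map_add, map_smul, hNb₁, hNb₃, e2]
        rw [hσap, hNG, sB_apply, trip_apply, trip_apply]
        simp only [add_smul]
        abel
      have hGz : ∀ w, z (trip p b₁ b₂ b₃ w) = zY p w := by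
        intro w
        rw [trip_apply]
        simp [map_add, map_smul, hzb₁, hzb₂, hzb₃, smul_eq_mul]
      exact transfer p σ (sB p) z (zY p) M (mulSocP2B p) hM (mulB_eq p)
        (trip p b₁ b₂ b₃) hGinj hGσ hGz
    · -- (iii)
      right
      obtain ⟨u, huk, huN⟩ := SetLike.not_le_iff_exists.mp hc
      have hzu : z u = 0 := LinearMap.mem_ker.mp huk
      have hNu : N u ≠ 0 := fun h => huN (LinearMap.mem_ker.mpr h)
      have hcNz : ¬ (LinearMap.ker N ≤ LinearMap.ker z) := by
        intro hle
        have heq : LinearMap.ker N = LinearMap.ker z :=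
          Submodule.eq_of_le_of_finrank_le hle (by rw [hkerz2, hkerN2])
        exact hc (le_of_eq heq.symm)
      obtain ⟨v, hvN, hvz⟩ := SetLike.not_le_iff_exists.mp hcNz
      have hNv : N v = 0 := LinearMap.mem_ker.mp hvN
      have hzv : z v ≠ 0 := fun h => hvz (LinearMap.mem_ker.mpr h)
      set b₃ : Vp p := (z v)⁻¹ • v with hb₃def
      have hzb₃ : z b₃ = 1 := by
        rw [hb₃def, map_smul, smul_eq_mul, inv_mul_cancel₀ hzv]
      have hNb₃ : N b₃ = 0 := by rw [hb₃def, map_smul, hNv, smul_zero]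
      set b₂ : Vp p := u with hb₂def
      set b₁ : Vp p := N u with hb₁def
      have hb₁ : b₁ ≠ 0 := hNu
      have hNb₁ : N b₁ = 0 := hA u
      have hzb₁ : z b₁ = 0 := hzN u
      have hzb₂ : z b₂ = 0 := hzu
      have hGinj : Function.Injective (trip p b₁ b₂ b₃) := by
        rw [injective_iff_map_eq_zero]
        intro w hw
        rw [trip_apply] at hw
        have h3 : w.2.2 = 0 := by
          have := congrArg z hw
          simpa [map_add, map_smul, hzb₁, hzb₂, hzb₃, smul_eq_mul] using this
        rw [h3, zero_smul, add_zero] at hw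
        have h2 : w.2.1 = 0 := by
          have := congrArg N hw
          simp only [map_add, map_smul, hNb₁, smul_zero, zero_add, map_zero] at this
          rcases smul_eq_zero.mp this with h | h
          · exact h
          · exact absurd h hb₁
        rw [h2, zero_smul, add_zero] at hw
        have h1 : w.1 = 0 := by
          rcases smul_eq_zero.mp hw with h | h
          · exact h
          · exact absurd h hb₁
        have : w = (w.1, w.2.1, w.2.2) := rfl
        rw [this, h1, h2, h3]; rfl
      have hGσ : ∀ w, σ (trip p b₁ b₂ b₃ w) = trip p b₁ b₂ b₃ (sB p w) := by
        intro w
        have e2 : N b₂ = b₁ := by rw [hb₂def, hb₁def]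
        have hNG : N (trip p b₁ b₂ b₃ w) = w.2.1 • b₁ := by
          rw [trip_apply]
          simp [map_add, map_smul, hNb₁, hNb₃, e2]
        rw [hσap, hNG, sB_apply, trip_apply, trip_apply]
        simp only [add_smul]
        abel
      have hGz : ∀ w, z (trip p b₁ b₂ b₃ w) = zZ p w := by
        intro w
        rw [trip_apply]
        simp [map_add, map_smul, hzb₁, hzb₂, hzb₃, smul_eq_mul]
      exact transfer p σ (sB p) z (zZ p) M (mulSocP2C p) hM (mulC_eq p)
        (trip p b₁ b₂ b₃) hGinj hGσ hGz
  · -- N² ≠ 0 : type (i)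
    left
    push_neg at hA
    obtain ⟨v0, hv0⟩ := hA
    have hvz : ∃ v, N (N v) ≠ 0 ∧ z v ≠ 0 := by
      by_cases h0 : z v0 = 0
      · by_cases h1 : N (N (v0 + τ)) = 0
        · refine ⟨τ, ?_, by rw [hzτ]; exact one_ne_zero⟩
          intro hτ0
          apply hv0
          have hh : N (N (v0 + τ)) = N (N v0) + N (N τ) := by
            rw [map_add, map_add]
          rw [h1, hτ0, add_zero] at hh
          exact hh.symm
        · exact ⟨v0 + τ, h1, by rw [map_add, h0, hzτ, zero_add]; exact one_ne_zero⟩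
      · exact ⟨v0, hv0, h0⟩
    obtain ⟨v, hvN, hvz⟩ := hvz
    set b₃ : Vp p := (z v)⁻¹ • v with hb₃def
    have hzb₃ : z b₃ = 1 := by
      rw [hb₃def, map_smul, smul_eq_mul, inv_mul_cancel₀ hvz]
    set b₂ : Vp p := N b₃ with hb₂def
    set b₁ : Vp p := N b₂ with hb₁def
    have hb₁ : b₁ ≠ 0 := by
      rw [hb₁def, hb₂def, hb₃def, map_smul, map_smul]
      exact smul_ne_zero (inv_ne_zero hvz) hvN
    have hNb₁ : N b₁ = 0 := hN3ap b₃
    have hzb₂ : z b₂ = 0 := hzN b₃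
    have hzb₁ : z b₁ = 0 := hzN b₂
    have hGinj : Function.Injective (trip p b₁ b₂ b₃) := by
      rw [injective_iff_map_eq_zero]
      intro w hw
      rw [trip_apply] at hw
      have h3 : w.2.2 = 0 := by
        have := congrArg z hw
        simpa [map_add, map_smul, hzb₁, hzb₂, hzb₃, smul_eq_mul] using this
      rw [h3, zero_smul, add_zero] at hw
      have h2 : w.2.1 = 0 := by
        have := congrArg N hw
        simp only [map_add, map_smul, hNb₁, smul_zero, zero_add, map_zero] at this
        rw [← hb₁def] at this
        rcases smul_eq_zero.mp this with h | h
        · exact h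
        · exact absurd h hb₁
      rw [h2, zero_smul, add_zero] at hw
      have h1 : w.1 = 0 := by
        rcases smul_eq_zero.mp hw with h | h
        · exact h
        · exact absurd h hb₁
      have : w = (w.1, w.2.1, w.2.2) := rfl
      rw [this, h1, h2, h3]; rfl
    have hGσ : ∀ w, σ (trip p b₁ b₂ b₃ w) = trip p b₁ b₂ b₃ (sA p w) := by
      intro w
      have e2 : N b₂ = b₁ := hb₁def.symm
      have e3 : N b₃ = b₂ := hb₂def.symm
      have hNG : N (trip p b₁ b₂ b₃ w) = w.2.1 • b₁ + w.2.2 • b₂ := by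
        rw [trip_apply]
        simp [map_add, map_smul, hNb₁, e2, e3]
      rw [hσap, hNG, sA_apply, trip_apply, trip_apply]
      simp only [add_smul]
      abel
    have hGz : ∀ w, z (trip p b₁ b₂ b₃ w) = zZ p w := by
      intro w
      rw [trip_apply]
      simp [map_add, map_smul, hzb₁, hzb₂, hzb₃, smul_eq_mul]
    exact transfer p σ (sA p) z (zZ p) M (mulSocP2A p) hM (mulA_eq p hodd)
      (trip p b₁ b₂ b₃) hGinj hGσ hGz

end LBV

namespace LBV

lemma part1 (p : ℕ) (hp : p.Prime) (hodd : p ≠ 2) (B : Type*) [LeftBrace B]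
    (e : B ≃+ Vp p)
    (hS : Nat.card ↥{a : B | ∀ b : B, a * b - a = b} = p ^ 2) :
    (∃ e : B ≃+ Vp p, ∀ x y : B, e (x * y) = mulSocP2A p (e x) (e y)) ∨
    (∃ e : B ≃+ Vp p, ∀ x y : B, e (x * y) = mulSocP2B p (e x) (e y)) ∨
    (∃ e : B ≃+ Vp p, ∀ x y : B, e (x * y) = mulSocP2C p (e x) (e y)) := by
  haveI : Fact p.Prime := ⟨hp⟩
  haveI : NeZero p := ⟨hp.ne_zero⟩
  classical
  set K := (LB.lamHom B).ker with hKdef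
  have hKset : ∀ a : B, a ∈ K ↔ ∀ b, a * b - a = b := fun a => LB.mem_ker_iff
  have hKcard : Nat.card K = p ^ 2 := by
    rw [← hS]
    exact Nat.card_congr (Equiv.subtypeEquivRight (fun a => hKset a))
  haveI : Finite B := Finite.of_equiv _ e.symm.toEquiv
  have hVcard : Nat.card (Vp p) = p ^ 3 := by
    simp only [Nat.card_prod, Nat.card_zmod]; ring
  have hBcard : Nat.card B = p ^ 3 := by rw [Nat.card_congr e.toEquiv, hVcard]
  have hQ : Nat.card (B ⧸ K) = p := by
    have h := Subgroup.card_eq_card_quotient_mul_card_subgroup K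
    rw [hBcard, hKcard] at h
    have h3 : p ^ 3 = p * p ^ 2 := by ring
    rw [h3] at h
    exact (Nat.eq_of_mul_eq_mul_right (pow_pos hp.pos 2) h.symm)
  have hKne : ∃ t : B, t ∉ K := by
    by_contra h
    push_neg at h
    have htop : K = ⊤ := by ext x; simpa using h x
    rw [htop] at hKcard
    have h2 : Nat.card (⊤ : Subgroup B) = Nat.card B :=
      Nat.card_congr Subgroup.topEquiv.toEquiv
    rw [h2, hBcard] at hKcard
    have h4 : p ^ 2 < p ^ 3 := Nat.pow_lt_pow_right hp.one_lt (by omega)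
    omega
  obtain ⟨t, ht⟩ := hKne
  have htp : t ^ p ∈ K := by
    have h1 : ((t : B ⧸ K)) ^ p = 1 := by rw [← hQ]; exact pow_card_eq_one'
    have h2 : ((t ^ p : B) : B ⧸ K) = 1 := by
      rw [← h1]; rfl
    exact (QuotientGroup.eq_one_iff _).mp h2
  -- additive subgroup structure of K
  have haddK : ∀ {a b : B}, a ∈ K → b ∈ K → a + b ∈ K := by
    intro a b ha hb
    have := mul_mem ha hb
    rwa [LB.K_mul ha b] at this
  have hzeroK : (0 : B) ∈ K := by rw [← LB.one_eq_zero]; exact one_mem K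
  let KA : AddSubgroup B :=
    { carrier := (K : Set B)
      add_mem' := haddK
      zero_mem' := hzeroK
      neg_mem' := fun h => LB.neg_mem_K h }
  let SV : AddSubgroup (Vp p) := KA.map e.toAddMonoidHom
  let S' : Submodule (ZMod p) (Vp p) := AddSubgroup.toZModSubmodule p SV
  have hmemS' : ∀ v : Vp p, v ∈ S' ↔ e.symm v ∈ K := by
    intro v
    constructor
    · rintro ⟨x, hx, rfl⟩
      simpa using (show x ∈ K from hx)
    · intro h
      exact ⟨e.symm v, h, by simp⟩
  have hS'card : Nat.card S' = p ^ 2 := by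
    rw [← hKcard]
    refine Nat.card_congr ⟨fun x => ⟨e.symm x.1, (hmemS' x.1).mp x.2⟩,
      fun y => ⟨e y.1, (hmemS' _).mpr (by simp [y.2])⟩, fun x => ?_, fun y => ?_⟩
    · apply Subtype.ext; simp
    · apply Subtype.ext; simp
  -- sigma
  let σe : Vp p ≃+ Vp p := (e.symm.trans (LB.lam t)).trans e
  let σ : Module.End (ZMod p) (Vp p) := AddMonoidHom.toZModLinearMap p σe.toAddMonoidHom
  have hσap : ∀ v, σ v = e (LB.lam t (e.symm v)) := fun v => rfl
  have hσpow : ∀ (n : ℕ) (b : B), (σ ^ n) (e b) = e (((LB.lamHom B t) ^ n) b) := by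
    intro n
    induction n with
    | zero => intro b; simp
    | succ n ih =>
      intro b
      rw [pow_succ', Module.End.mul_apply, ih, hσap, AddEquiv.symm_apply_apply]
      congr 1
      rw [pow_succ']
      rfl
  have hσp : σ ^ p = 1 := by
    have hltp : (LB.lamHom B t) ^ p = 1 := by
      rw [← map_pow]
      exact MonoidHom.mem_ker.mp htp
    apply LinearMap.ext
    intro v
    have := hσpow p (e.symm v)
    rw [hltp, AddEquiv.apply_symm_apply] at this
    simpa using this
  have hσne : ∃ v : Vp p, σ v ≠ v := by
    have h1 : ¬ ∀ b, t * b - t = b := fun h => ht ((hKset t).mpr h)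
    push_neg at h1
    obtain ⟨b, hb⟩ := h1
    refine ⟨e b, fun h0 => hb ?_⟩
    rw [hσap, AddEquiv.symm_apply_apply] at h0
    have := e.injective h0
    rwa [LB.lam_apply] at this
  -- z
  have hτS : (e t) ∉ S' := fun h => ht (by simpa using (hmemS' _).mp h)
  have hq : Nat.card (Vp p ⧸ S') = p := by
    have h := Submodule.card_eq_card_quotient_mul_card S'
    rw [hVcard, hS'card] at h
    have h3 : p ^ 3 = p ^ 2 * p := by ring
    rw [h3] at h
    exact (Nat.eq_of_mul_eq_mul_left (pow_pos hp.pos 2) h).symm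
  set π := S'.mkQ with hπdef
  have hπτ : π (e t) ≠ 0 := by
    rw [hπdef, Submodule.mkQ_apply]
    intro h0
    exact hτS ((Submodule.Quotient.mk_eq_zero S').mp h0)
  set φ := LinearMap.toSpanSingleton (ZMod p) (Vp p ⧸ S') (π (e t)) with hφdef
  have hφap : ∀ c, φ c = c • π (e t) := fun c => rfl
  have hφinj : Function.Injective φ := by
    rw [injective_iff_map_eq_zero]
    intro c hc
    by_contra h0
    apply hπτ
    have h1 : π (e t) = c⁻¹ • (c • π (e t)) := by
      rw [smul_smul, inv_mul_cancel₀ h0, one_smul]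
    rw [h1, ← hφap, hc, smul_zero]
  haveI : Finite (Vp p ⧸ S') := Quotient.finite _
  have hφbij : Function.Bijective φ :=
    (Nat.bijective_iff_injective_and_card φ).mpr ⟨hφinj, by rw [Nat.card_zmod, hq]⟩
  set ψ := LinearEquiv.ofBijective φ hφbij with hψdef
  set z : Vp p →ₗ[ZMod p] ZMod p := ψ.symm.toLinearMap ∘ₗ π with hzdef2
  have hzdef : ∀ v, z v = ψ.symm (π v) := fun _ => rfl
  have hψ1 : ψ 1 = π (e t) := by
    show φ 1 = π (e t)
    rw [hφap, one_smul]
  have hzτ : z (e t) = 1 := by rw [hzdef, ← hψ1, LinearEquiv.symm_apply_apply]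
  have hzker : ∀ v, z v = 0 ↔ v ∈ S' := by
    intro v
    rw [hzdef]
    constructor
    · intro h
      have h2 : π v = 0 := by
        have h3 := congrArg ψ h
        rwa [LinearEquiv.apply_symm_apply, map_zero] at h3
      rw [hπdef, Submodule.mkQ_apply] at h2
      exact (Submodule.Quotient.mk_eq_zero S').mp h2
    · intro h
      have h2 : π v = 0 := by
        rw [hπdef, Submodule.mkQ_apply]
        exact (Submodule.Quotient.mk_eq_zero S').mpr h
      rw [h2, map_zero]
  have hσS : ∀ v ∈ S', σ v ∈ S' := by
    intro v hv
    rw [hmemS'] at hv ⊢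
    rw [hσap, AddEquiv.symm_apply_apply, LB.lam_apply]
    exact LB.L_mem_K t hv
  have hzσ : ∀ v, z (σ v) = z v := by
    set c := z (σ (e t)) with hc
    have hgen : ∀ v, z (σ v) = c * z v := by
      intro v
      have hs : v - z v • (e t) ∈ S' := by
        rw [← hzker, map_sub, map_smul, hzτ, smul_eq_mul, mul_one, sub_self]
      have h0 : z (σ (v - z v • e t)) = 0 := (hzker _).mpr (hσS _ hs)
      have hexp : σ v = σ (v - z v • e t) + z v • σ (e t) := by
        rw [map_sub, map_smul]; abel
      rw [hexp, map_add, h0, zero_add, map_smul, smul_eq_mul, ← hc]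
      ring
    have hcn : ∀ n : ℕ, z ((σ ^ n) (e t)) = c ^ n := by
      intro n
      induction n with
      | zero => simpa using hzτ
      | succ n ih =>
        rw [pow_succ', Module.End.mul_apply, hgen, ih, pow_succ]
        ring
    have hcp : c ^ p = 1 := by
      have h1 := hcn p
      rw [hσp] at h1
      simp only [Module.End.one_apply] at h1
      rw [hzτ] at h1
      exact h1.symm
    have hc1 : c = 1 := by rw [← ZMod.pow_card c, hcp]
    intro v
    rw [hgen, hc1, one_mul]
  have hcoset : ∀ b : B, (t * b - t) - b ∈ K := by
    intro b
    have h1 : σ (e b) - e b ∈ S' := by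
      rw [← hzker, map_sub, hzσ, sub_self]
    rw [hmemS'] at h1
    have h2 : e.symm (σ (e b) - e b) = (t * b - t) - b := by
      rw [map_sub, hσap, AddEquiv.symm_apply_apply, AddEquiv.symm_apply_apply, LB.lam_apply]
    rwa [h2] at h1
  have hMkey : ∀ x y : B, e (x * y) = e x + (σ ^ (z (e x)).val) (e y) := by
    intro x y
    have hk : x - (z (e x)).val • t ∈ K := by
      have hv : e x - ((((z (e x)).val : ℕ)) : ZMod p) • (e t) ∈ S' := by
        rw [← hzker, map_sub, map_smul, hzτ, smul_eq_mul, mul_one]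
        rw [val_cast p (z (e x)), sub_self]
      rw [Nat.cast_smul_eq_nsmul] at hv
      rw [hmemS'] at hv
      have h2 : e.symm (e x - (z (e x)).val • e t) = x - (z (e x)).val • t := by
        rw [map_sub, AddEquiv.symm_apply_apply, map_nsmul, AddEquiv.symm_apply_apply]
      rwa [h2] at hv
    have hlam := LB.lam_pow t hcoset ((z (e x)).val) x hk
    have hxy : x * y = x + (LB.lamHom B x) y := by
      show x * y = x + (LB.lam x) y
      rw [LB.lam_apply]; abel
    rw [hxy, map_add, hlam, hσpow]
  have hMv : ∀ a b : Vp p, e (e.symm a * e.symm b) = a + (σ ^ (z a).val) b := by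
    intro a b
    rw [hMkey, e.apply_symm_apply, e.apply_symm_apply]
  obtain h | h | h := classify p hodd σ z (e t) hzτ hσp hσne hzσ
    (fun a b => e (e.symm a * e.symm b)) hMv
  · left
    obtain ⟨Φ, hΦ⟩ := h
    refine ⟨e.trans Φ, fun x y => ?_⟩
    have := hΦ (e x) (e y)
    simpa using this
  · right; left
    obtain ⟨Φ, hΦ⟩ := h
    refine ⟨e.trans Φ, fun x y => ?_⟩
    have := hΦ (e x) (e y)
    simpa using this
  · right; right
    obtain ⟨Φ, hΦ⟩ := h
    refine ⟨e.trans Φ, fun x y => ?_⟩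
    have := hΦ (e x) (e y)
    simpa using this

end LBV
namespace LBV
variable (p : ℕ) [Fact p.Prime]

lemma notAB (hodd : p ≠ 2) :
    ¬∃ f : Vp p ≃+ Vp p, ∀ a b, f (mulSocP2A p a b) = mulSocP2B p (f a) (f b) := by
  rintro ⟨f, hf⟩
  set t : Vp p := ((0 : ZMod p), (0 : ZMod p), (1 : ZMod p)) with ht
  set m := (f t).2.1 with hm
  have hkey : ∀ b : Vp p, f (b.1 + b.2.1, b.2.1 + b.2.2, b.2.2) =
      f b + (m * (f b).2.1, 0, 0) := by
    intro b
    have h := hf t b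
    have hA : mulSocP2A p t b = t + (b.1 + b.2.1, b.2.1 + b.2.2, b.2.2) := by
      refine Prod.ext ?_ (Prod.ext ?_ ?_) <;>
        simp [mulSocP2A, choose2ZMod, ht, Prod.fst_add, Prod.snd_add] <;> ring
    have hB : mulSocP2B p (f t) (f b) = f t + (f b + (m * (f b).2.1, 0, 0)) := by
      refine Prod.ext ?_ (Prod.ext ?_ ?_) <;>
        simp [mulSocP2B, Prod.fst_add, Prod.snd_add, hm] <;> ring
    rw [hA, map_add, hB] at h
    exact add_left_cancel h
  have hD : ∀ b : Vp p, f (b.2.1, b.2.2, 0) = (m * (f b).2.1, 0, 0) := by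
    intro b
    have h := hkey b
    have h2 : (b.2.1, b.2.2, (0 : ZMod p)) = ((b.1 + b.2.1, b.2.1 + b.2.2, b.2.2) : Vp p) - b := by
      refine Prod.ext ?_ (Prod.ext ?_ ?_) <;> simp
    rw [h2, map_sub, h, add_sub_cancel_left]
  have h1 := hD t
  have h3 : (f ((0 : ZMod p), (1 : ZMod p), (0 : ZMod p))).2.1 = 0 := by
    have := congrArg (fun v : Vp p => v.2.1) h1
    simpa [ht] using this
  have h4 : f ((1 : ZMod p), (0 : ZMod p), (0 : ZMod p)) = 0 := by
    have : ((1 : ZMod p), (0 : ZMod p), (0 : ZMod p)) =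
        ((((0 : ZMod p), (1 : ZMod p), (0 : ZMod p)) : Vp p).2.1,
          (((0 : ZMod p), (1 : ZMod p), (0 : ZMod p)) : Vp p).2.2, (0 : ZMod p)) := rfl
    rw [this, hD, h3, mul_zero]
    rfl
  have h5 : (((1 : ZMod p), (0 : ZMod p), (0 : ZMod p)) : Vp p) = 0 := by
    apply f.injective
    rw [h4, map_zero]
  have := congrArg (fun v : Vp p => v.1) h5
  simpa using this

lemma notAC (hodd : p ≠ 2) :
    ¬∃ f : Vp p ≃+ Vp p, ∀ a b, f (mulSocP2A p a b) = mulSocP2C p (f a) (f b) := by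
  rintro ⟨f, hf⟩
  set t : Vp p := ((0 : ZMod p), (0 : ZMod p), (1 : ZMod p)) with ht
  set m := (f t).2.2 with hm
  have hkey : ∀ b : Vp p, f (b.1 + b.2.1, b.2.1 + b.2.2, b.2.2) =
      f b + (m * (f b).2.1, 0, 0) := by
    intro b
    have h := hf t b
    have hA : mulSocP2A p t b = t + (b.1 + b.2.1, b.2.1 + b.2.2, b.2.2) := by
      refine Prod.ext ?_ (Prod.ext ?_ ?_) <;>
        simp [mulSocP2A, choose2ZMod, ht, Prod.fst_add, Prod.snd_add] <;> ring
    have hB : mulSocP2C p (f t) (f b) = f t + (f b + (m * (f b).2.1, 0, 0)) := by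
      refine Prod.ext ?_ (Prod.ext ?_ ?_) <;>
        simp [mulSocP2C, Prod.fst_add, Prod.snd_add, hm] <;> ring
    rw [hA, map_add, hB] at h
    exact add_left_cancel h
  have hD : ∀ b : Vp p, f (b.2.1, b.2.2, 0) = (m * (f b).2.1, 0, 0) := by
    intro b
    have h := hkey b
    have h2 : (b.2.1, b.2.2, (0 : ZMod p)) = ((b.1 + b.2.1, b.2.1 + b.2.2, b.2.2) : Vp p) - b := by
      refine Prod.ext ?_ (Prod.ext ?_ ?_) <;> simp
    rw [h2, map_sub, h, add_sub_cancel_left]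
  have h1 := hD t
  have h3 : (f ((0 : ZMod p), (1 : ZMod p), (0 : ZMod p))).2.1 = 0 := by
    have := congrArg (fun v : Vp p => v.2.1) h1
    simpa [ht] using this
  have h4 : f ((1 : ZMod p), (0 : ZMod p), (0 : ZMod p)) = 0 := by
    have he : (((1 : ZMod p), (0 : ZMod p), (0 : ZMod p)) : Vp p) =
        ((((0 : ZMod p), (1 : ZMod p), (0 : ZMod p)) : Vp p).2.1,
          (((0 : ZMod p), (1 : ZMod p), (0 : ZMod p)) : Vp p).2.2, (0 : ZMod p)) := rfl
    rw [he, hD, h3, mul_zero]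
    rfl
  have h5 : (((1 : ZMod p), (0 : ZMod p), (0 : ZMod p)) : Vp p) = 0 := by
    apply f.injective
    rw [h4, map_zero]
  have := congrArg (fun v : Vp p => v.1) h5
  simpa using this

lemma notBC :
    ¬∃ f : Vp p ≃+ Vp p, ∀ a b, f (mulSocP2B p a b) = mulSocP2C p (f a) (f b) := by
  rintro ⟨f, hf⟩
  have hkey : ∀ a b : Vp p, f (a.2.1 * b.2.1, 0, 0) = ((f a).2.2 * (f b).2.1, 0, 0) := by
    intro a b
    have h := hf a b
    have hB : mulSocP2B p a b = (a + b) + ((a.2.1 * b.2.1 : ZMod p), (0 : ZMod p), (0 : ZMod p)) := by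
      refine Prod.ext ?_ (Prod.ext ?_ ?_) <;>
        simp [mulSocP2B, Prod.fst_add, Prod.snd_add] <;> ring
    have hC : mulSocP2C p (f a) (f b) =
        (f a + f b) + (((f a).2.2 * (f b).2.1 : ZMod p), (0 : ZMod p), (0 : ZMod p)) := by
      refine Prod.ext ?_ (Prod.ext ?_ ?_) <;>
        simp [mulSocP2C, Prod.fst_add, Prod.snd_add] <;> ring
    rw [hB, hC, map_add, map_add] at h
    exact add_left_cancel h
  set e1 : Vp p := ((1 : ZMod p), (0 : ZMod p), (0 : ZMod p)) with he1
  set e2 : Vp p := ((0 : ZMod p), (1 : ZMod p), (0 : ZMod p)) with he2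
  set e3 : Vp p := ((0 : ZMod p), (0 : ZMod p), (1 : ZMod p)) with he3
  set α := (f e2).2.2 with hα
  set γ := (f e2).2.1 with hγ
  have h11 : f e1 = (α * γ, 0, 0) := by
    have h := hkey e2 e2
    simpa [he1, he2] using h
  have h23 : α * (f e3).2.1 = 0 := by
    have h := hkey e2 e3
    have h0 : ((e2.2.1 * e3.2.1 : ZMod p), (0 : ZMod p), (0 : ZMod p)) = (0 : Vp p) := by
      simp [he2, he3]
    rw [h0, map_zero] at h
    have := congrArg (fun v : Vp p => v.1) h
    simpa using this.symm
  have h32 : (f e3).2.2 * γ = 0 := by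
    have h := hkey e3 e2
    have h0 : ((e3.2.1 * e2.2.1 : ZMod p), (0 : ZMod p), (0 : ZMod p)) = (0 : Vp p) := by
      simp [he2, he3]
    rw [h0, map_zero] at h
    have := congrArg (fun v : Vp p => v.1) h
    simpa using this.symm
  have hαγ : α * γ ≠ 0 := by
    intro h0
    have : f e1 = 0 := by rw [h11, h0]; rfl
    have he : e1 = 0 := by apply f.injective; rw [this, map_zero]
    have := congrArg (fun v : Vp p => v.1) he
    simp [he1] at this
  have hαne : α ≠ 0 := fun h => hαγ (by rw [h, zero_mul])
  have hγne : γ ≠ 0 := fun h => hαγ (by rw [h, mul_zero])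
  have hf31 : (f e3).2.1 = 0 := by
    rcases mul_eq_zero.mp h23 with h | h
    · exact absurd h hαne
    · exact h
  have hf32 : (f e3).2.2 = 0 := by
    rcases mul_eq_zero.mp h32 with h | h
    · exact h
    · exact absurd h hγne
  have hfe3 : f e3 = ((f e3).1, 0, 0) := by
    refine Prod.ext rfl (Prod.ext ?_ ?_) <;> simp [hf31, hf32]
  set δ := (f e3).1 with hδ
  set x : Vp p := (α * γ) • e3 - δ • e1 with hx
  have hfx : f x = 0 := by
    rw [hx, map_sub, ZMod.map_smul, ZMod.map_smul, hfe3, h11]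
    refine Prod.ext ?_ (Prod.ext ?_ ?_) <;>
      simp [Prod.smul_def, smul_eq_mul] <;> ring
  have hx0 : x = 0 := by apply f.injective; rw [hfx, map_zero]
  have := congrArg (fun v : Vp p => v.2.2) hx0
  rw [hx] at this
  simp [he1, he3, Prod.smul_def, smul_eq_mul] at this
  rcases this with h | h
  · exact hαne h
  · exact hγne h

end LBV

/-- For an odd prime `p`, every left brace with additive group isomorphic to `(Z/(p))³`
whose socle has order `p²` is isomorphic to exactly one of the three left braces with
multiplications `mulSocP2A`, `mulSocP2B`, `mulSocP2C`; these are pairwise non-isomorphic. -/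
theorem braces_p_cubed_elementary_socle_p2 (p : ℕ) (hp : p.Prime) (hodd : p ≠ 2) :
    (∀ (B : Type*) [LeftBrace B], (B ≃+ ZMod p × ZMod p × ZMod p) →
      Nat.card ↥{a : B | ∀ b : B, a * b - a = b} = p ^ 2 →
      (∃ e : B ≃+ ZMod p × ZMod p × ZMod p,
        ∀ x y : B, e (x * y) = mulSocP2A p (e x) (e y)) ∨
      (∃ e : B ≃+ ZMod p × ZMod p × ZMod p,
        ∀ x y : B, e (x * y) = mulSocP2B p (e x) (e y)) ∨
      (∃ e : B ≃+ ZMod p × ZMod p × ZMod p,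
        ∀ x y : B, e (x * y) = mulSocP2C p (e x) (e y))) ∧
    (¬∃ f : (ZMod p × ZMod p × ZMod p) ≃+ ZMod p × ZMod p × ZMod p,
      ∀ a b, f (mulSocP2A p a b) = mulSocP2B p (f a) (f b)) ∧
    (¬∃ f : (ZMod p × ZMod p × ZMod p) ≃+ ZMod p × ZMod p × ZMod p,
      ∀ a b, f (mulSocP2A p a b) = mulSocP2C p (f a) (f b)) ∧
    (¬∃ f : (ZMod p × ZMod p × ZMod p) ≃+ ZMod p × ZMod p × ZMod p,
      ∀ a b, f (mulSocP2B p a b) = mulSocP2C p (f a) (f b)) := by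
  haveI : Fact p.Prime := ⟨hp⟩
  refine ⟨?_, LBV.notAB p hodd, LBV.notAC p hodd, LBV.notBC p⟩
  intro B _ e hS
  exact LBV.part1 p hp hodd B e hS
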